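/- Fix α ∈ (0,1) and a function u ∈ L¹(ℝ^d) supported in the unit cube [0,1]^d with finite Gagliardo W^{1-α,1} seminorm. For each integer k ≥ 0 let v_k be the conditional expectation of u on the dyadic cubes of side 2^{-k} (i.e. v_k is constant on each dyadic k-cube, equal to the average of u there), and set u_0 = v_0 and u_k = v_k - v_{k-1} for k ≥ 1. Then there is a constant C = C(d,α) such that Σ_{k=1}^∞ 2^{(1-α)k} ‖u_k‖₁ ≤ C ∫∫ |u(x)-u(y)|/|x-y|^{d+1-α} dx dy. -/

import Mathlib

open MeasureTheory Filter
open scoped Classical ENNReal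
set_option maxHeartbeats 1000000

/-- The Gagliardo `W^{1-α,1}` seminorm of `u : ℝ^d → ℝ`, as an extended real. -/
noncomputable def gagliardo (d : ℕ) (α : ℝ) (u : EuclideanSpace ℝ (Fin d) → ℝ) : ENNReal :=
  ∫⁻ x, ∫⁻ y, ENNReal.ofReal (|u x - u y| / ‖x - y‖ ^ ((d : ℝ) + 1 - α))

/-- The unit cube `[0,1]^d`. -/
def unitCube (d : ℕ) : Set (EuclideanSpace ℝ (Fin d)) :=
  {x | ∀ i, x i ∈ Set.Icc (0 : ℝ) 1}

/-- `dyadicAvg d u k x` is the average of `u` over the (half-open) dyadic cube of side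
`2^{-k}` containing `x`, i.e. the conditional expectation of `u` on dyadic `k`-cubes. -/
noncomputable def dyadicAvg (d : ℕ) (u : EuclideanSpace ℝ (Fin d) → ℝ) (k : ℕ)
    (x : EuclideanSpace ℝ (Fin d)) : ℝ :=
  (2 : ℝ) ^ (k * d) *
    ∫ y in {y : EuclideanSpace ℝ (Fin d) |
      ∀ i, ⌊(2 : ℝ) ^ k * y i⌋ = ⌊(2 : ℝ) ^ k * x i⌋}, u y

namespace Stmt2Aux


abbrev E (d : ℕ) := EuclideanSpace ℝ (Fin d)

/-- dyadic cube of level k containing x -/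
def cube (d k : ℕ) (x : E d) : Set (E d) :=
  {y | ∀ i, ⌊(2 : ℝ) ^ k * y i⌋ = ⌊(2 : ℝ) ^ k * x i⌋}

lemma measurable_floorCoord (d k : ℕ) (i : Fin d) :
    Measurable fun y : E d => ⌊(2 : ℝ) ^ k * y i⌋ :=
  Int.measurable_floor.comp (measurable_const.mul
    ((measurable_pi_apply i).comp (MeasurableEquiv.toLp 2 (Fin d → ℝ)).symm.measurable))

lemma measurableSet_cube (d k : ℕ) (x : E d) : MeasurableSet (cube d k x) := by
  have : cube d k x = ⋂ i, (fun y : E d => ⌊(2 : ℝ) ^ k * y i⌋) ⁻¹' {⌊(2 : ℝ) ^ k * x i⌋} := by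
    ext y; simp [cube]
  rw [this]
  exact MeasurableSet.iInter fun i => (measurable_floorCoord d k i) (measurableSet_singleton _)

lemma cube_eq_preimage (d k : ℕ) (x : E d) :
    cube d k x = (MeasurableEquiv.toLp 2 (Fin d → ℝ)).symm ⁻¹'
      (Set.univ.pi fun i => Set.Ico ((⌊(2:ℝ)^k * x i⌋ : ℝ) / 2 ^ k) ((⌊(2:ℝ)^k * x i⌋ + 1) / 2 ^ k)) := by
  have h2 : (0:ℝ) < 2 ^ k := by positivity
  ext y
  simp only [cube, Set.mem_setOf_eq, Set.mem_preimage, Set.mem_pi, Set.mem_univ, forall_true_left,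
    Set.mem_Ico]
  refine forall_congr' fun i => ?_
  have : (MeasurableEquiv.toLp 2 (Fin d → ℝ)).symm y i = y i := rfl
  rw [this, Int.floor_eq_iff, div_le_iff₀ h2, lt_div_iff₀ h2]
  constructor
  · rintro ⟨h1, h2⟩; exact ⟨by linarith [mul_comm ((2:ℝ)^k) (y i)] , by
      rw [mul_comm]; linarith⟩
  · rintro ⟨h1, h2⟩; constructor <;> rw [mul_comm] at * <;> linarith

lemma volume_cube (d k : ℕ) (x : E d) :
    volume (cube d k x) = ENNReal.ofReal (((2:ℝ) ^ (k * d))⁻¹) := by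
  rw [cube_eq_preimage]
  rw [(EuclideanSpace.volume_preserving_symm_measurableEquiv_toLp (Fin d)).measure_preimage
    (MeasurableSet.univ_pi fun i => measurableSet_Ico).nullMeasurableSet]
  rw [volume_pi_pi]
  have h2 : (0:ℝ) < 2 ^ k := by positivity
  have : ∀ i : Fin d, volume (Set.Ico ((⌊(2:ℝ)^k * x i⌋ : ℝ) / 2 ^ k)
      ((⌊(2:ℝ)^k * x i⌋ + 1) / 2 ^ k)) = ENNReal.ofReal (((2:ℝ)^k)⁻¹) := by
    intro i
    rw [Real.volume_Ico]
    congr 1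
    field_simp
    ring
  simp only [this, Finset.prod_const, Finset.card_univ, Fintype.card_fin]
  rw [← ENNReal.ofReal_pow (by positivity)]
  congr 1
  rw [← inv_pow, ← pow_mul]
  exact inv_pow 2 (k * d)

lemma volume_cube_lt_top (d k : ℕ) (x : E d) : volume (cube d k x) < ⊤ := by
  rw [volume_cube]; exact ENNReal.ofReal_lt_top

lemma toReal_volume_cube (d k : ℕ) (x : E d) :
    (volume (cube d k x)).toReal = ((2:ℝ) ^ (k * d))⁻¹ := by
  rw [volume_cube, ENNReal.toReal_ofReal (by positivity)]

/-- membership in cubes is symmetric -/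
lemma mem_cube_comm {d k : ℕ} {x y : E d} : y ∈ cube d k x ↔ x ∈ cube d k y := by
  constructor <;> intro h i <;> exact (h i).symm

lemma floor_half_eq {a b : ℝ} (h : ⌊a⌋ = ⌊b⌋) : ⌊a / 2⌋ = ⌊b / 2⌋ := by
  have key : ∀ c : ℝ, ⌊c / 2⌋ = ⌊c⌋ / 2 := by
    intro c
    rw [Int.floor_eq_iff]
    have h1 : (2:ℤ) * (⌊c⌋ / 2) + ⌊c⌋ % 2 = ⌊c⌋ := Int.mul_ediv_add_emod _ _
    have h2 : (0:ℤ) ≤ ⌊c⌋ % 2 := Int.emod_nonneg _ (by norm_num)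
    have h3 : ⌊c⌋ % 2 < 2 := Int.emod_lt_of_pos _ (by norm_num)
    have h4 : (⌊c⌋ : ℝ) ≤ c := Int.floor_le c
    have h5 : c < ⌊c⌋ + 1 := Int.lt_floor_add_one c
    constructor
    · have : ((2 * (⌊c⌋ / 2) : ℤ) : ℝ) ≤ (⌊c⌋ : ℝ) := by exact_mod_cast by omega
      push_cast at this ⊢
      linarith
    · have : ((⌊c⌋ : ℤ) : ℝ) + 1 ≤ 2 * ((⌊c⌋ / 2 : ℤ) : ℝ) + 2 := by exact_mod_cast by omega
      push_cast at this ⊢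
      linarith
  rw [key a, key b, h]

lemma cube_succ_subset (d k : ℕ) (x : E d) : cube d (k+1) x ⊆ cube d k x := by
  intro y hy i
  have := hy i
  have ha : (2:ℝ) ^ k * y i = ((2:ℝ) ^ (k+1) * y i) / 2 := by ring
  have hb : (2:ℝ) ^ k * x i = ((2:ℝ) ^ (k+1) * x i) / 2 := by ring
  rw [ha, hb]
  exact floor_half_eq this


noncomputable def dyadicAvg' (d : ℕ) (u : E d → ℝ) (k : ℕ) (x : E d) : ℝ :=
  (2 : ℝ) ^ (k * d) * ∫ y in cube d k x, u y

/-- helper: `ofReal` of an integral is at most the lintegral. -/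
lemma ofReal_integral_le {X : Type*} [MeasurableSpace X] (μ : Measure X) (f : X → ℝ)
    (hf : 0 ≤ᵐ[μ] f) :
    ENNReal.ofReal (∫ x, f x ∂μ) ≤ ∫⁻ x, ENNReal.ofReal (f x) ∂μ := by
  by_cases hi : Integrable f μ
  · exact (ofReal_integral_eq_lintegral_ofReal hi hf).le
  · rw [integral_undef hi]; simp

lemma measurable_dyadicAvg' {d : ℕ} {g : E d → ℝ} (k : ℕ) :
    Measurable fun x => dyadicAvg' d g k x := by
  have hφ : Measurable fun x : E d => fun i : Fin d => ⌊(2:ℝ)^k * x i⌋ :=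
    measurable_pi_lambda _ fun i => measurable_floorCoord d k i
  have : (fun x => dyadicAvg' d g k x) =
      (fun n : Fin d → ℤ => (2 : ℝ) ^ (k * d) *
        ∫ y in {y : E d | ∀ i, ⌊(2:ℝ)^k * y i⌋ = n i}, g y) ∘
      (fun x : E d => fun i : Fin d => ⌊(2:ℝ)^k * x i⌋) := rfl
  rw [this]
  exact (measurable_of_countable _).comp hφ

lemma dyadicAvg'_congr {d : ℕ} {u g : E d → ℝ} (h : u =ᵐ[volume] g) (k : ℕ) (x : E d) :
    dyadicAvg' d u k x = dyadicAvg' d g k x := by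
  unfold dyadicAvg'
  congr 1
  exact integral_congr_ae (ae_restrict_of_ae h)

lemma abs_int_le {X : Type*} [MeasurableSpace X] (μ : Measure X) (f : X → ℝ) :
    |∫ x, f x ∂μ| ≤ ∫ x, |f x| ∂μ := by
  simpa [Real.norm_eq_abs] using norm_integral_le_integral_norm (μ := μ) f

/-- Claim 1: pointwise bound on the martingale difference. -/
lemma claim1 {d : ℕ} {g : E d → ℝ} (hg : Integrable g) (k : ℕ) (x : E d)
    (hgm : AEStronglyMeasurable g volume) :
    ENNReal.ofReal |dyadicAvg' d g (k+1) x - dyadicAvg' d g k x| ≤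
      ENNReal.ofReal ((2:ℝ) ^ ((2*k+1)*d)) *
        ∫⁻ y in cube d k x, ∫⁻ z in cube d k x, ENNReal.ofReal |g y - g z| := by
  set Q1 := cube d (k+1) x
  set Q0 := cube d k x
  have hQ1m : MeasurableSet Q1 := measurableSet_cube d (k+1) x
  have hQ0m : MeasurableSet Q0 := measurableSet_cube d k x
  have hQ1f : volume Q1 < ⊤ := volume_cube_lt_top d (k+1) x
  have hQ0f : volume Q0 < ⊤ := volume_cube_lt_top d k x
  set m0 : ℝ := ((2:ℝ) ^ (k * d))⁻¹ with hm0
  set m1 : ℝ := ((2:ℝ) ^ ((k+1) * d))⁻¹ with hm1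
  set a : ℝ := ∫ y in Q1, g y
  set b : ℝ := ∫ z in Q0, g z
  -- inner integral identity
  have hinner : ∀ y : E d, (∫ z in Q0, (g y - g z)) = m0 * g y - b := by
    intro y
    rw [integral_sub (integrableOn_const (C := g y) hQ0f.ne) hg.integrableOn]
    rw [setIntegral_const, measureReal_def, toReal_volume_cube]
    simp [smul_eq_mul, hm0]
    rfl
  have houter : (∫ y in Q1, ∫ z in Q0, (g y - g z)) = m0 * a - m1 * b := by
    rw [integral_congr_ae (ae_of_all _ hinner)]
    rw [integral_sub ((hg.integrableOn).const_mul m0) (integrableOn_const hQ1f.ne)]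
    rw [integral_const_mul, setIntegral_const, measureReal_def, toReal_volume_cube]
    simp [smul_eq_mul, hm1]
    exact Or.inl rfl
  -- the difference identity
  have hdiff : dyadicAvg' d g (k+1) x - dyadicAvg' d g k x =
      (2:ℝ) ^ ((2*k+1)*d) * ∫ y in Q1, ∫ z in Q0, (g y - g z) := by
    rw [houter]
    unfold dyadicAvg'
    have key : ((2*k+1)*d) = ((k+1)*d) + k*d := by ring
    have key2 : ((2*k+1)*d) = (k*d) + (k+1)*d := by ring
    have e1 : (2:ℝ) ^ ((2*k+1)*d) * m0 = (2:ℝ) ^ ((k+1)*d) := by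
      rw [hm0, key, pow_add]
      field_simp
    have e2 : (2:ℝ) ^ ((2*k+1)*d) * m1 = (2:ℝ) ^ (k*d) := by
      rw [hm1, key2, pow_add]
      field_simp
    calc (2:ℝ)^((k+1)*d) * a - (2:ℝ)^(k*d) * b
        = ((2:ℝ) ^ ((2*k+1)*d) * m0) * a - ((2:ℝ) ^ ((2*k+1)*d) * m1) * b := by rw [e1, e2]
      _ = (2:ℝ) ^ ((2*k+1)*d) * (m0 * a - m1 * b) := by ring
  rw [hdiff, abs_mul, abs_of_nonneg (by positivity : (0:ℝ) ≤ (2:ℝ)^((2*k+1)*d)),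
    ENNReal.ofReal_mul (by positivity)]
  refine mul_le_mul_right ?_ _
  -- now bound ofReal |∫∫ (g y - g z)|
  calc ENNReal.ofReal |∫ y in Q1, ∫ z in Q0, (g y - g z)|
      ≤ ENNReal.ofReal (∫ y in Q1, |∫ z in Q0, (g y - g z)|) := by
        apply ENNReal.ofReal_le_ofReal
        exact abs_int_le _ _
    _ ≤ ∫⁻ y in Q1, ENNReal.ofReal |∫ z in Q0, (g y - g z)| := by
        apply ofReal_integral_le
        exact ae_of_all _ fun y => abs_nonneg _
    _ ≤ ∫⁻ y in Q1, ∫⁻ z in Q0, ENNReal.ofReal |g y - g z| := by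
        apply lintegral_mono
        intro y
        calc ENNReal.ofReal |∫ z in Q0, (g y - g z)|
            ≤ ENNReal.ofReal (∫ z in Q0, |g y - g z|) :=
              ENNReal.ofReal_le_ofReal (abs_int_le _ _)
          _ ≤ ∫⁻ z in Q0, ENNReal.ofReal |g y - g z| :=
              ofReal_integral_le _ _ (ae_of_all _ fun z => abs_nonneg _)
    _ ≤ ∫⁻ y in Q0, ∫⁻ z in Q0, ENNReal.ofReal |g y - g z| := by
        apply lintegral_mono_set
        exact cube_succ_subset d k x

lemma mem_cube_trans {d k : ℕ} {x y z : E d} (h1 : y ∈ cube d k x) (h2 : z ∈ cube d k y) :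
    z ∈ cube d k x := fun i => (h2 i).trans (h1 i)

noncomputable def ind (d k : ℕ) (x y : E d) : ℝ≥0∞ := if y ∈ cube d k x then 1 else 0

lemma ind_ne_top {d k : ℕ} (x y : E d) : ind d k x y ≠ ⊤ := by
  unfold ind; split <;> simp

lemma ind_comm {d k : ℕ} (x y : E d) : ind d k x y = ind d k y x := by
  unfold ind; simp [mem_cube_comm]

lemma measurable_indPair (d k : ℕ) :
    Measurable fun p : E d × E d => ind d k p.1 p.2 := by
  have hS : MeasurableSet {p : E d × E d | p.2 ∈ cube d k p.1} := by
    have : {p : E d × E d | p.2 ∈ cube d k p.1} =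
        ⋂ i, (fun p : E d × E d => ⌊(2:ℝ)^k * p.2 i⌋ - ⌊(2:ℝ)^k * p.1 i⌋) ⁻¹' {0} := by
      ext p
      simp only [Set.mem_setOf_eq, Set.mem_iInter, Set.mem_preimage, Set.mem_singleton_iff,
        sub_eq_zero, cube]
    rw [this]
    exact MeasurableSet.iInter fun i =>
      (((measurable_floorCoord d k i).comp measurable_snd).sub
        ((measurable_floorCoord d k i).comp measurable_fst)) (measurableSet_singleton _)
  have : (fun p : E d × E d => ind d k p.1 p.2) =
      {p : E d × E d | p.2 ∈ cube d k p.1}.indicator (fun _ => 1) := by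
    funext p
    by_cases h : p.2 ∈ cube d k p.1 <;> simp [ind, h]
  rw [this]
  exact measurable_const.indicator hS

lemma lintegral_cube (d k : ℕ) (x : E d) (f : E d → ℝ≥0∞) :
    ∫⁻ y in cube d k x, f y = ∫⁻ y, ind d k x y * f y := by
  rw [← lintegral_indicator (measurableSet_cube d k x)]
  congr 1
  funext y
  by_cases h : y ∈ cube d k x <;> simp [ind, h]

lemma lintegral_ind (d k : ℕ) (y : E d) :
    ∫⁻ x, ind d k x y = ENNReal.ofReal (((2:ℝ) ^ (k * d))⁻¹) := by
  have : (fun x => ind d k x y) = (cube d k y).indicator (fun _ => 1) := by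
    funext x
    by_cases h : x ∈ cube d k y
    · simp [ind, mem_cube_comm.2 h, Set.indicator_of_mem h]
    · have : y ∉ cube d k x := fun hc => h (mem_cube_comm.1 hc)
      simp [ind, this, Set.indicator_of_notMem h]
  rw [this, lintegral_indicator (measurableSet_cube d k y), setLIntegral_one, volume_cube]

/-- Stage 3 main: the Fubini swap identity. -/
lemma swap_eq (d k : ℕ) (h : E d → E d → ℝ≥0∞) (hm : Measurable (Function.uncurry h))
    (hfin : ∀ y z, h y z ≠ ⊤) :
    ∫⁻ x, ∫⁻ y in cube d k x, ∫⁻ z in cube d k x, h y z =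
      ENNReal.ofReal (((2:ℝ) ^ (k * d))⁻¹) * ∫⁻ y, ∫⁻ z, ind d k y z * h y z := by
  have hproj1 : Measurable fun q : E d × E d × E d => ind d k q.1 q.2.1 :=
    (measurable_indPair d k).comp (measurable_fst.prodMk (measurable_fst.comp measurable_snd))
  have hproj2 : Measurable fun q : E d × E d × E d => ind d k q.1 q.2.2 :=
    (measurable_indPair d k).comp (measurable_fst.prodMk (measurable_snd.comp measurable_snd))
  have hproj3 : Measurable fun q : E d × E d × E d => h q.2.1 q.2.2 :=
    hm.comp ((measurable_fst.comp measurable_snd).prodMk (measurable_snd.comp measurable_snd))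
  have hbig : Measurable fun q : E d × E d × E d =>
      ind d k q.1 q.2.1 * (ind d k q.1 q.2.2 * h q.2.1 q.2.2) :=
    hproj1.mul (hproj2.mul hproj3)
  -- step 1: rewrite restricted integrals using ind
  have step1 : ∀ x, (∫⁻ y in cube d k x, ∫⁻ z in cube d k x, h y z) =
      ∫⁻ y, ∫⁻ z, ind d k x y * (ind d k x z * h y z) := by
    intro x
    rw [lintegral_cube]
    congr 1
    funext y
    rw [lintegral_cube, lintegral_const_mul' _ _ (ind_ne_top x y)]
  simp_rw [step1]
  -- step 2: uncurry inner two integrals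
  have step2 : ∀ x, (∫⁻ y, ∫⁻ z, ind d k x y * (ind d k x z * h y z)) =
      ∫⁻ p : E d × E d, ind d k x p.1 * (ind d k x p.2 * h p.1 p.2)
        ∂((volume : Measure (E d)).prod volume) := by
    intro x
    rw [lintegral_prod]
    exact ((hbig.comp (measurable_prodMk_left (x := x)))).aemeasurable
  simp_rw [step2]
  -- step 3: swap
  rw [lintegral_lintegral_swap]
  swap
  · exact hbig.aemeasurable
  -- step 4: compute inner integral over x
  have step4 : ∀ p : E d × E d, (∫⁻ x, ind d k x p.1 * (ind d k x p.2 * h p.1 p.2)) =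
      (ind d k p.1 p.2 * h p.1 p.2) * ENNReal.ofReal (((2:ℝ) ^ (k * d))⁻¹) := by
    rintro ⟨y, z⟩
    have hpt : ∀ x, ind d k x y * (ind d k x z * h y z) =
        (ind d k y z * h y z) * ind d k x y := by
      intro x
      by_cases h1 : y ∈ cube d k x
      · by_cases h2 : z ∈ cube d k x
        · have : z ∈ cube d k y := mem_cube_trans (mem_cube_comm.1 h1) h2
          simp [ind, h1, h2, this, mul_comm]
        · have : z ∉ cube d k y := fun hc => h2 (mem_cube_trans h1 hc)
          simp [ind, h1, h2, this]
      · simp [ind, h1]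
    simp_rw [hpt]
    rw [lintegral_const_mul' _ _ (ENNReal.mul_ne_top (ind_ne_top _ _) (hfin y z)),
      lintegral_ind]
  simp_rw [step4]
  rw [lintegral_mul_const' _ _ (by simp : ENNReal.ofReal (((2:ℝ) ^ (k * d))⁻¹) ≠ ⊤)]
  have hip := lintegral_prod (μ := (volume : Measure (E d))) (ν := (volume : Measure (E d)))
    (f := fun p : E d × E d => ind d k p.1 p.2 * h p.1 p.2)
    ((measurable_indPair d k).mul hm).aemeasurable
  rw [hip]
  exact mul_comm _ _

lemma geom_bound {r : ℝ} (hr : 2 ≤ r) (n : ℕ) :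
    ∑ k ∈ Finset.range n, r ^ (k+1) ≤ r ^ (n+1) := by
  induction n with
  | zero => simp; nlinarith
  | succ n ih =>
    rw [Finset.sum_range_succ]
    have h1 : r ^ (n+1) + r ^ (n+1) ≤ r ^ (n+2) := by
      have : (2:ℝ) * r ^ (n+1) ≤ r * r ^ (n+1) := by
        apply mul_le_mul_of_nonneg_right hr (by positivity)
      calc r ^ (n+1) + r ^ (n+1) = 2 * r ^ (n+1) := by ring
        _ ≤ r * r ^ (n+1) := this
        _ = r ^ (n+2) := by ring
    linarith

lemma pow_le_of_mem_cube {d k : ℕ} {y z : E d} (h : z ∈ cube d k y) (hyz : y ≠ z) :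
    (2:ℝ) ^ k ≤ Real.sqrt d / ‖y - z‖ := by
  have hn : (0:ℝ) < ‖y - z‖ := norm_pos_iff.2 (sub_ne_zero.2 hyz)
  have h2k : (0:ℝ) < 2 ^ k := by positivity
  have hco : ∀ i, |y i - z i| ≤ ((2:ℝ)^k)⁻¹ := by
    intro i
    have := Int.abs_sub_lt_one_of_floor_eq_floor ((h i).symm)
    have habs : |(2:ℝ)^k * y i - (2:ℝ)^k * z i| = (2:ℝ)^k * |y i - z i| := by
      rw [← mul_sub, abs_mul, abs_of_pos h2k]
    rw [habs] at this
    have := this.le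
    calc |y i - z i| = ((2:ℝ)^k)⁻¹ * ((2:ℝ)^k * |y i - z i|) := by field_simp
      _ ≤ ((2:ℝ)^k)⁻¹ * 1 := by
          apply mul_le_mul_of_nonneg_left this (by positivity)
      _ = ((2:ℝ)^k)⁻¹ := mul_one _
  have hnorm : ‖y - z‖ ≤ Real.sqrt d * ((2:ℝ)^k)⁻¹ := by
    rw [EuclideanSpace.norm_eq]
    have hsum : (∑ i, ‖(y - z) i‖ ^ 2) ≤ (d : ℝ) * (((2:ℝ)^k)⁻¹)^2 := by
      calc (∑ i, ‖(y - z) i‖ ^ 2) ≤ ∑ _i : Fin d, (((2:ℝ)^k)⁻¹)^2 := by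
            apply Finset.sum_le_sum
            intro i _
            have : ‖(y - z) i‖ = |y i - z i| := by
              rw [Real.norm_eq_abs, PiLp.sub_apply]
            rw [this]
            have h0 : (0:ℝ) ≤ |y i - z i| := abs_nonneg _
            nlinarith [hco i]
        _ = (d : ℝ) * (((2:ℝ)^k)⁻¹)^2 := by simp [Finset.sum_const]
    calc Real.sqrt (∑ i, ‖(y - z) i‖ ^ 2) ≤ Real.sqrt ((d : ℝ) * (((2:ℝ)^k)⁻¹)^2) :=
          Real.sqrt_le_sqrt hsum
      _ = Real.sqrt d * ((2:ℝ)^k)⁻¹ := by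
          rw [Real.sqrt_mul (by positivity), Real.sqrt_sq (by positivity)]
  rw [le_div_iff₀ hn]
  calc (2:ℝ)^k * ‖y - z‖ ≤ (2:ℝ)^k * (Real.sqrt d * ((2:ℝ)^k)⁻¹) := by
        apply mul_le_mul_of_nonneg_left hnorm (by positivity)
    _ = Real.sqrt d := by field_simp
    _ ≤ Real.sqrt d := le_rfl

/-- Claim 4: the pointwise summation bound. -/
lemma claim4 (d : ℕ) (hd : 1 ≤ d) (α : ℝ) (hα : α < 1) (y z : E d) (g : E d → ℝ) :
    (∑' k : ℕ, ENNReal.ofReal ((2:ℝ) ^ (((d:ℝ) + 1 - α) * ((k:ℝ)+1))) * ind d k y z) *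
        ENNReal.ofReal |g y - g z| ≤
      ENNReal.ofReal ((2:ℝ) ^ (2*((d:ℝ)+1-α)) * Real.sqrt d ^ ((d:ℝ)+1-α)) *
        ENNReal.ofReal (|g y - g z| / ‖y - z‖ ^ ((d:ℝ)+1-α)) := by
  set s : ℝ := (d:ℝ) + 1 - α with hs
  have hs1 : 1 ≤ s := by
    have : (1:ℝ) ≤ (d:ℝ) := by exact_mod_cast hd
    simp only [hs]; linarith
  set r : ℝ := (2:ℝ) ^ s with hrdef
  have hr2 : (2:ℝ) ≤ r := by
    calc (2:ℝ) = (2:ℝ) ^ (1:ℝ) := (Real.rpow_one 2).symm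
      _ ≤ (2:ℝ) ^ s := Real.rpow_le_rpow_of_exponent_le (by norm_num) hs1
  have hr0 : (0:ℝ) < r := lt_of_lt_of_le (by norm_num) hr2
  have hterm : ∀ k : ℕ, (2:ℝ) ^ (s * ((k:ℝ)+1)) = r ^ (k+1) := by
    intro k
    rw [hrdef, ← Real.rpow_natCast ((2:ℝ)^s) (k+1), ← Real.rpow_mul (by norm_num)]
    push_cast
    ring_nf
  by_cases hyz : y = z
  · subst hyz
    simp
  · have hn : (0:ℝ) < ‖y - z‖ := norm_pos_iff.2 (sub_ne_zero.2 hyz)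
    by_cases hex : ∃ k, z ∈ cube d k y
    · obtain ⟨k₀, hk₀⟩ := hex
      set M : ℝ := Real.sqrt d / ‖y - z‖ with hM
      have hkey : ∀ k : ℕ, z ∈ cube d k y → (2:ℝ)^k ≤ M := fun k hk =>
        pow_le_of_mem_cube hk hyz
      have hM1 : (1:ℝ) ≤ M := le_trans (one_le_pow₀ (by norm_num)) (hkey k₀ hk₀)
      have hM0 : (0:ℝ) < M := lt_of_lt_of_le one_pos hM1
      have hlogb0 : (0:ℝ) ≤ Real.logb 2 M := Real.logb_nonneg (by norm_num) hM1
      set n : ℕ := ⌊Real.logb 2 M⌋₊ + 1 with hndef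
      have hkn : ∀ k : ℕ, z ∈ cube d k y → k < n := by
        intro k hk
        have h1 : (2:ℝ) ^ (k:ℝ) ≤ M := by
          rw [Real.rpow_natCast]; exact hkey k hk
        have h2 : (k:ℝ) ≤ Real.logb 2 M := by
          rw [Real.le_logb_iff_rpow_le (by norm_num) hM0]; exact h1
        have := Nat.le_floor h2
        omega
      -- sum over range n
      have htsum : (∑' k : ℕ, ENNReal.ofReal ((2:ℝ) ^ (s * ((k:ℝ)+1))) * ind d k y z) ≤
          ENNReal.ofReal (r ^ (n+1)) := by
        rw [tsum_eq_sum (s := Finset.range n) (fun k hk => by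
          have : z ∉ cube d k y := fun hc => hk (Finset.mem_range.2 (hkn k hc))
          simp [ind, this])]
        calc ∑ k ∈ Finset.range n, ENNReal.ofReal ((2:ℝ) ^ (s * ((k:ℝ)+1))) * ind d k y z
            ≤ ∑ k ∈ Finset.range n, ENNReal.ofReal (r ^ (k+1)) := by
              apply Finset.sum_le_sum
              intro k _
              rw [hterm k]
              calc ENNReal.ofReal (r^(k+1)) * ind d k y z ≤ ENNReal.ofReal (r^(k+1)) * 1 := by
                    apply mul_le_mul_right
                    unfold ind; split <;> simp
                _ = ENNReal.ofReal (r^(k+1)) := mul_one _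
          _ = ENNReal.ofReal (∑ k ∈ Finset.range n, r ^ (k+1)) := by
              rw [ENNReal.ofReal_sum_of_nonneg]
              intro k _
              positivity
          _ ≤ ENNReal.ofReal (r ^ (n+1)) := ENNReal.ofReal_le_ofReal (geom_bound hr2 n)
      -- bound r^(n+1)
      have hrn : r ^ (n+1) ≤ (2:ℝ) ^ (2*s) * M ^ s := by
        have h2n : (2:ℝ) ^ ((n:ℝ)+1) ≤ 4 * M := by
          have hfl : (⌊Real.logb 2 M⌋₊ : ℝ) ≤ Real.logb 2 M := Nat.floor_le hlogb0
          have : (2:ℝ) ^ ((⌊Real.logb 2 M⌋₊ : ℝ)) ≤ (2:ℝ) ^ (Real.logb 2 M) :=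
            Real.rpow_le_rpow_of_exponent_le (by norm_num) hfl
          rw [Real.rpow_logb (by norm_num) (by norm_num) hM0] at this
          have hn1 : ((n:ℝ)+1) = (⌊Real.logb 2 M⌋₊ : ℝ) + 2 := by
            rw [hndef]; push_cast; ring
          rw [hn1, Real.rpow_add (by norm_num)]
          calc (2:ℝ) ^ ((⌊Real.logb 2 M⌋₊:ℝ)) * (2:ℝ)^(2:ℝ) ≤ M * (2:ℝ)^(2:ℝ) := by
                apply mul_le_mul_of_nonneg_right this (by positivity)
            _ = 4 * M := by rw [show (2:ℝ)^(2:ℝ) = 4 by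
                  rw [show (2:ℝ) = ((2:ℕ):ℝ) by norm_num, Real.rpow_natCast]; norm_num]; ring
        calc r ^ (n+1) = ((2:ℝ) ^ ((n:ℝ)+1)) ^ s := by
              rw [hrdef, ← Real.rpow_natCast ((2:ℝ)^s) (n+1), ← Real.rpow_mul (by norm_num),
                ← Real.rpow_mul (by norm_num)]
              push_cast
              ring_nf
          _ ≤ (4 * M) ^ s := by
              apply Real.rpow_le_rpow (by positivity) h2n
              linarith
          _ = 4 ^ s * M ^ s := Real.mul_rpow (by norm_num) (le_of_lt hM0)
          _ = (2:ℝ) ^ (2*s) * M ^ s := by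
              congr 1
              rw [show (4:ℝ) = (2:ℝ)^(2:ℝ) by
                  rw [show (2:ℝ) = ((2:ℕ):ℝ) by norm_num, Real.rpow_natCast]; norm_num,
                ← Real.rpow_mul (by norm_num)]
      -- assemble
      have hMs : M ^ s = Real.sqrt d ^ s / ‖y - z‖ ^ s := by
        rw [hM]; exact Real.div_rpow (Real.sqrt_nonneg _) (le_of_lt hn) s
      calc (∑' k : ℕ, ENNReal.ofReal ((2:ℝ) ^ (s * ((k:ℝ)+1))) * ind d k y z) *
              ENNReal.ofReal |g y - g z|
          ≤ ENNReal.ofReal (r ^ (n+1)) * ENNReal.ofReal |g y - g z| :=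
            mul_le_mul_left htsum _
        _ ≤ ENNReal.ofReal ((2:ℝ) ^ (2*s) * M ^ s) * ENNReal.ofReal |g y - g z| :=
            mul_le_mul_left (ENNReal.ofReal_le_ofReal hrn) _
        _ = ENNReal.ofReal ((2:ℝ) ^ (2*s) * Real.sqrt d ^ s) *
              ENNReal.ofReal (|g y - g z| / ‖y - z‖ ^ s) := by
            rw [← ENNReal.ofReal_mul (by positivity), ← ENNReal.ofReal_mul (by positivity)]
            congr 1
            rw [hMs]
            have hP : (0:ℝ) < ‖y - z‖ ^ s := Real.rpow_pos_of_pos hn s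
            field_simp
    · have hzero : ∀ k : ℕ, ENNReal.ofReal ((2:ℝ) ^ (s * ((k:ℝ)+1))) * ind d k y z = 0 := by
        intro k
        have : z ∉ cube d k y := fun hc => hex ⟨k, hc⟩
        simp [ind, this]
      simp only [hzero, tsum_zero, zero_mul]
      exact zero_le'

lemma gagliardo_congr {d : ℕ} (α : ℝ) {u g : E d → ℝ} (h : u =ᵐ[volume] g) :
    gagliardo d α u = gagliardo d α g := by
  unfold gagliardo
  apply lintegral_congr_ae
  filter_upwards [h] with x hx
  apply lintegral_congr_ae
  filter_upwards [h] with y hy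
  rw [hx, hy]

end Stmt2Aux

open Stmt2Aux in
theorem stmt2 (d : ℕ) (hd : 1 ≤ d) (α : ℝ) (hα : α ∈ Set.Ioo (0 : ℝ) 1) :
    ∃ C > (0 : ℝ), ∀ u : EuclideanSpace ℝ (Fin d) → ℝ,
      Integrable u → (∀ x, x ∉ unitCube d → u x = 0) →
      gagliardo d α u < ⊤ →
      ∑' k : ℕ, ENNReal.ofReal
          ((2 : ℝ) ^ ((1 - α) * ((k : ℝ) + 1)) *
            ∫ x, |dyadicAvg d u (k + 1) x - dyadicAvg d u k x|) ≤
        ENNReal.ofReal C * gagliardo d α u := by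
  obtain ⟨hα0, hα1⟩ := hα
  have hdpos : (0:ℝ) < d := by exact_mod_cast Nat.lt_of_lt_of_le Nat.zero_lt_one hd
  set s : ℝ := (d:ℝ) + 1 - α with hsdef
  refine ⟨(2:ℝ) ^ (2*s) * Real.sqrt d ^ s, ?_, ?_⟩
  · exact mul_pos (Real.rpow_pos_of_pos (by norm_num) _)
      (Real.rpow_pos_of_pos (Real.sqrt_pos.2 hdpos) _)
  intro u hu _hsupp _hgag
  -- replace u by a strongly measurable representative g
  set g : E d → ℝ := hu.1.mk u with hgdef
  have hgm : StronglyMeasurable g := hu.1.stronglyMeasurable_mk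
  have hug : u =ᵐ[volume] g := hu.1.ae_eq_mk
  have hg : Integrable g := hu.congr hug
  have hgM : Measurable g := hgm.measurable
  -- the kernel h
  set h : E d → E d → ℝ≥0∞ := fun y z => ENNReal.ofReal |g y - g z| with hhdef
  have hhm : Measurable (Function.uncurry h) :=
    ENNReal.measurable_ofReal.comp
      (((hgM.comp measurable_fst).sub (hgM.comp measurable_snd)).abs)
  have hhfin : ∀ y z, h y z ≠ ⊤ := fun y z => ENNReal.ofReal_ne_top
  -- replace dyadicAvg u by dyadicAvg' g
  have havg : ∀ k x, dyadicAvg d u k x = dyadicAvg' d g k x := fun k x =>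
    dyadicAvg'_congr hug k x
  have hI : ∀ k : ℕ, (∫ x, |dyadicAvg d u (k + 1) x - dyadicAvg d u k x|) =
      ∫ x, |dyadicAvg' d g (k + 1) x - dyadicAvg' d g k x| := by
    intro k
    apply integral_congr_ae
    apply ae_of_all
    intro x
    simp only []
    rw [havg, havg]
  -- weights
  set W : ℕ → ℝ≥0∞ := fun k => ENNReal.ofReal ((2:ℝ) ^ (s * ((k:ℝ)+1))) with hWdef
  set T : ℕ → ℝ≥0∞ := fun k => ∫⁻ y, ∫⁻ z, ind d k y z * h y z with hTdef
  -- per-k inequality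
  have hperk : ∀ k : ℕ, ENNReal.ofReal
      ((2 : ℝ) ^ ((1 - α) * ((k : ℝ) + 1)) *
        ∫ x, |dyadicAvg d u (k + 1) x - dyadicAvg d u k x|) ≤ W k * T k := by
    intro k
    rw [hI k, ENNReal.ofReal_mul (by positivity)]
    have step1 : ENNReal.ofReal (∫ x, |dyadicAvg' d g (k + 1) x - dyadicAvg' d g k x|) ≤
        ∫⁻ x, ENNReal.ofReal |dyadicAvg' d g (k + 1) x - dyadicAvg' d g k x| :=
      ofReal_integral_le _ _ (ae_of_all _ fun x => abs_nonneg _)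
    have step2 : (∫⁻ x, ENNReal.ofReal |dyadicAvg' d g (k + 1) x - dyadicAvg' d g k x|) ≤
        ENNReal.ofReal ((2:ℝ) ^ ((2*k+1)*d)) *
          ∫⁻ x, ∫⁻ y in cube d k x, ∫⁻ z in cube d k x, h y z := by
      rw [← lintegral_const_mul' _ _ ENNReal.ofReal_ne_top]
      exact lintegral_mono fun x => claim1 hg k x hgm.aestronglyMeasurable
    have step3 : ENNReal.ofReal ((2:ℝ) ^ ((2*k+1)*d)) *
          (∫⁻ x, ∫⁻ y in cube d k x, ∫⁻ z in cube d k x, h y z) =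
        ENNReal.ofReal ((2:ℝ) ^ ((2*k+1)*d)) * (ENNReal.ofReal (((2:ℝ) ^ (k * d))⁻¹) * T k) := by
      rw [swap_eq d k h hhm hhfin]
    have hconst : ENNReal.ofReal ((2 : ℝ) ^ ((1 - α) * ((k : ℝ) + 1))) *
        (ENNReal.ofReal ((2:ℝ) ^ ((2*k+1)*d)) * ENNReal.ofReal (((2:ℝ) ^ (k * d))⁻¹)) = W k := by
      rw [← ENNReal.ofReal_mul (by positivity), ← ENNReal.ofReal_mul (by positivity), hWdef]
      congr 1
      have e1 : ((2:ℝ) ^ ((2*k+1)*d) : ℝ) = (2:ℝ) ^ ((((2*k+1)*d : ℕ)):ℝ) := by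
        rw [Real.rpow_natCast]
      have e2 : (((2:ℝ) ^ (k*d))⁻¹ : ℝ) = (2:ℝ) ^ (-(((k*d : ℕ)):ℝ)) := by
        rw [Real.rpow_neg (by norm_num), Real.rpow_natCast]
      rw [e1, e2, ← Real.rpow_add (by norm_num), ← Real.rpow_add (by norm_num)]
      congr 1
      push_cast
      rw [hsdef]
      ring
    calc ENNReal.ofReal ((2 : ℝ) ^ ((1 - α) * ((k : ℝ) + 1))) *
          ENNReal.ofReal (∫ x, |dyadicAvg' d g (k + 1) x - dyadicAvg' d g k x|)
        ≤ ENNReal.ofReal ((2 : ℝ) ^ ((1 - α) * ((k : ℝ) + 1))) *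
            (ENNReal.ofReal ((2:ℝ) ^ ((2*k+1)*d)) *
              (ENNReal.ofReal (((2:ℝ) ^ (k * d))⁻¹) * T k)) := by
          rw [← step3]
          exact mul_le_mul_right (le_trans step1 step2) _
      _ = W k * T k := by rw [← hconst]; ring
  -- sum up
  calc ∑' k : ℕ, ENNReal.ofReal
          ((2 : ℝ) ^ ((1 - α) * ((k : ℝ) + 1)) *
            ∫ x, |dyadicAvg d u (k + 1) x - dyadicAvg d u k x|)
      ≤ ∑' k : ℕ, W k * T k := ENNReal.tsum_le_tsum hperk
    _ = ∫⁻ y, ∫⁻ z, (∑' k : ℕ, W k * ind d k y z) * h y z := by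
        have hWT : ∀ k : ℕ, W k * T k = ∫⁻ y, ∫⁻ z, W k * (ind d k y z * h y z) := by
          intro k
          rw [hTdef]
          rw [← lintegral_const_mul' _ _ ENNReal.ofReal_ne_top]
          congr 1
          funext y
          rw [← lintegral_const_mul' _ _ ENNReal.ofReal_ne_top]
        simp_rw [hWT]
        rw [← lintegral_tsum]
        swap
        · intro k
          apply Measurable.aemeasurable
          apply Measurable.lintegral_prod_right
          exact measurable_const.mul ((measurable_indPair d k).mul hhm)
        congr 1
        funext y
        rw [← lintegral_tsum]
        swap
        · intro k
          apply Measurable.aemeasurable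
          exact measurable_const.mul
            (((measurable_indPair d k).comp measurable_prodMk_left).mul
              (hhm.comp measurable_prodMk_left))
        congr 1
        funext z
        rw [← ENNReal.tsum_mul_right]
        congr 1
        funext k
        ring
    _ ≤ ∫⁻ y, ∫⁻ z, ENNReal.ofReal ((2:ℝ) ^ (2*s) * Real.sqrt d ^ s) *
          ENNReal.ofReal (|g y - g z| / ‖y - z‖ ^ s) := by
        apply lintegral_mono
        intro y
        apply lintegral_mono
        intro z
        exact claim4 d hd α hα1 y z g
    _ = ENNReal.ofReal ((2:ℝ) ^ (2*s) * Real.sqrt d ^ s) * gagliardo d α g := by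
        rw [gagliardo]
        rw [← lintegral_const_mul' _ _ ENNReal.ofReal_ne_top]
        congr 1
        funext y
        rw [← lintegral_const_mul' _ _ ENNReal.ofReal_ne_top]
    _ = ENNReal.ofReal ((2:ℝ) ^ (2*s) * Real.sqrt d ^ s) * gagliardo d α u := by
        rw [gagliardo_congr α hug]
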